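/- Let d be a TS-metric on F₂ⁿ, r > 0, and B = B_d(0,r). If B has exactly 4 elements, then either B = {0, e_i, e_j, e_k} for three distinct indices i, j, k ∈ Fin n, or B = {0, e_i, e_j, e_i + e_j} for two distinct indices i ≠ j. -/
import Mathlib


open Set Function

/-- A weight on a binary vector space `ι → ZMod 2`. -/
def IsWeight {ι : Type*} (ω : (ι → ZMod 2) → ℝ) : Prop :=
  (∀ x, 0 ≤ ω x) ∧ (∀ x, ω x = 0 ↔ x = 0) ∧ ∀ x y, ω (x + y) ≤ ω x + ω y

/-- A function respects the support of vectors. -/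
def RespectsSupport {ι : Type*} (ω : (ι → ZMod 2) → ℝ) : Prop :=
  ∀ x y : ι → ZMod 2, Function.support x ⊆ Function.support y → ω x ≤ ω y

/-- A TS-metric: a (translation-invariant) metric determined by a weight
that respects support, i.e. `d x y = ω (x + y)` (note `-y = y` in char 2). -/
def IsTSMetric {ι : Type*} (d : (ι → ZMod 2) → (ι → ZMod 2) → ℝ) : Prop :=
  ∃ ω, IsWeight ω ∧ RespectsSupport ω ∧ ∀ x y, d x y = ω (x + y)

/-- The ball `B_d(x, r)`. -/
def tsBall {ι : Type*} (d : (ι → ZMod 2) → (ι → ZMod 2) → ℝ) (x : ι → ZMod 2) (r : ℝ) :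
    Set (ι → ZMod 2) := {y | d x y ≤ r}

/-- `(D, C)` is a tiling: the translates `c + D`, `c ∈ C`, are pairwise disjoint
and cover the whole space. -/
def IsTiling {ι : Type*} (D C : Set (ι → ZMod 2)) : Prop :=
  (⋃ c ∈ C, (c + ·) '' D) = Set.univ ∧
  C.Pairwise fun c c' => Disjoint ((c + ·) '' D) ((c' + ·) '' D)

/-- `C` is a `(d, r)`-perfect code: the balls of radius `r` centered at codewords
are pairwise disjoint and cover the whole space. -/
def IsPerfectCode {ι : Type*} (d : (ι → ZMod 2) → (ι → ZMod 2) → ℝ) (r : ℝ)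
    (C : Set (ι → ZMod 2)) : Prop :=
  (⋃ c ∈ C, tsBall d c r) = Set.univ ∧
  C.Pairwise fun c c' => Disjoint (tsBall d c r) (tsBall d c' r)

/-- A polyhedromino: any two points of `D` are joined by a geodesic path
(w.r.t. the Hamming distance) lying inside `D`. -/
def IsPolyhedromino {ι : Type*} [Fintype ι] (D : Set (ι → ZMod 2)) : Prop :=
  ∀ x ∈ D, ∀ y ∈ D, ∃ γ : ℕ → (ι → ZMod 2),
    γ 0 = x ∧ γ (hammingDist x y) = y ∧
    (∀ i ≤ hammingDist x y, γ i ∈ D) ∧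
    ∀ i < hammingDist x y, hammingDist (γ i) (γ (i + 1)) = 1

/-- A poly-tiling: a tiling whose tile is a polyhedromino. -/
def IsPolyTiling {ι : Type*} [Fintype ι] (D C : Set (ι → ZMod 2)) : Prop :=
  IsTiling D C ∧ IsPolyhedromino D

/-- The vector `e_i` with support `{i}`. -/
def unitVec {ι : Type*} [DecidableEq ι] (i : ι) : ι → ZMod 2 := Pi.single i 1

/-- The `F`-combinatorial weight: the minimal number of members of `F` needed
to cover the support of `x`. -/
noncomputable def combWeight {ι : Type*} [DecidableEq ι] (F : Finset (Finset ι))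
    (x : ι → ZMod 2) : ℕ :=
  sInf {k | ∃ A : Finset (Finset ι), A ⊆ F ∧ A.card = k ∧ Function.support x ⊆ ↑(A.sup id)}

/-- The axioms of a metric. -/
def IsMetric {α : Type*} (d : α → α → ℝ) : Prop :=
  (∀ x y, d x y = 0 ↔ x = y) ∧ (∀ x y, d x y = d y x) ∧ ∀ x y z, d x z ≤ d x y + d y z

/-- The max-metric on the product (concatenation) space, identified with
functions on `Fin n ⊕ Fin m`. -/
def dmax {n m : ℕ} (d₁ : (Fin n → ZMod 2) → (Fin n → ZMod 2) → ℝ)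
    (d₂ : (Fin m → ZMod 2) → (Fin m → ZMod 2) → ℝ)
    (w w' : Fin n ⊕ Fin m → ZMod 2) : ℝ :=
  max (d₁ (fun i => w (Sum.inl i)) (fun i => w' (Sum.inl i)))
      (d₂ (fun j => w (Sum.inr j)) (fun j => w' (Sum.inr j)))

lemma zmod2_ne_zero {a : ZMod 2} (h : a ≠ 0) : a = 1 := by revert h; revert a; decide

lemma unitVec_same {n : ℕ} (i : Fin n) : unitVec i i = 1 := Pi.single_eq_same i 1

lemma unitVec_ne {n : ℕ} {i j : Fin n} (h : j ≠ i) : unitVec i j = 0 :=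
  Pi.single_eq_of_ne h 1

lemma unitVec_injective {n : ℕ} {i j : Fin n} (h : unitVec i = unitVec j) : i = j := by
  by_contra hne
  have := congrFun h i
  rw [unitVec_same, unitVec_ne hne] at this
  exact one_ne_zero this

/-- a TS-ball centered at `0` with exactly 4 elements is either
`{0, e_i, e_j, e_k}` for distinct `i, j, k`, or `{0, e_i, e_j, e_i + e_j}` for `i ≠ j`. -/
theorem stmt_4 {n : ℕ} (d : (Fin n → ZMod 2) → (Fin n → ZMod 2) → ℝ)
    (hd : IsTSMetric d) (r : ℝ) (hr : 0 < r)
    (h : (tsBall d 0 r).ncard = 4) :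
    (∃ i j k : Fin n, i ≠ j ∧ i ≠ k ∧ j ≠ k ∧
      tsBall d 0 r = {0, unitVec i, unitVec j, unitVec k}) ∨
    (∃ i j : Fin n, i ≠ j ∧
      tsBall d 0 r = {0, unitVec i, unitVec j, unitVec i + unitVec j}) := by
  obtain ⟨ω, ⟨hpos, hzero, htri⟩, hsupp, hdω⟩ := hd
  have hmem : ∀ x, x ∈ tsBall d 0 r ↔ ω x ≤ r := by
    intro x; simp [tsBall, hdω, Set.mem_setOf_eq]
  have h0 : (0 : Fin n → ZMod 2) ∈ tsBall d 0 r := by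
    rw [hmem, (hzero 0).2 rfl]; exact hr.le
  have hdown : ∀ x ∈ tsBall d 0 r, ∀ y : Fin n → ZMod 2,
      Function.support y ⊆ Function.support x → y ∈ tsBall d 0 r := by
    intro x hx y hy
    rw [hmem] at hx ⊢
    exact le_trans (hsupp y x hy) hx
  by_cases hcase : ∃ x ∈ tsBall d 0 r, ∃ i j : Fin n, i ≠ j ∧ x i ≠ 0 ∧ x j ≠ 0
  · right
    obtain ⟨x, hx, i, j, hij, hxi, hxj⟩ := hcase
    refine ⟨i, j, hij, ?_⟩
    have hsub : ({0, unitVec i, unitVec j, unitVec i + unitVec j} :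
        Set (Fin n → ZMod 2)) ⊆ tsBall d 0 r := by
      intro y hy
      rcases hy with rfl | rfl | rfl | rfl
      · exact h0
      · refine hdown x hx _ (fun l hl => ?_)
        by_cases hli : l = i
        · subst hli; exact hxi
        · exact absurd (unitVec_ne hli) hl
      · refine hdown x hx _ (fun l hl => ?_)
        by_cases hlj : l = j
        · subst hlj; exact hxj
        · exact absurd (unitVec_ne hlj) hl
      · refine hdown x hx _ (fun l hl => ?_)
        by_cases hli : l = i
        · subst hli; exact hxi
        by_cases hlj : l = j
        · subst hlj; exact hxj
        · exfalso
          apply hl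
          show unitVec i l + unitVec j l = 0
          rw [unitVec_ne hli, unitVec_ne hlj, add_zero]
    have h1 : unitVec i ≠ (0 : Fin n → ZMod 2) := by
      intro hc; exact one_ne_zero ((unitVec_same i) ▸ congrFun hc i)
    have h2 : unitVec j ≠ (0 : Fin n → ZMod 2) := by
      intro hc; exact one_ne_zero ((unitVec_same j) ▸ congrFun hc j)
    have h12 : unitVec i ≠ unitVec j := fun hc => hij (unitVec_injective hc)
    have h3 : unitVec i + unitVec j ≠ (0 : Fin n → ZMod 2) := by
      intro hc
      have := congrFun hc i
      rw [Pi.add_apply, unitVec_same, unitVec_ne hij, add_zero] at this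
      exact one_ne_zero this
    have h13 : unitVec i + unitVec j ≠ unitVec i := by
      intro hc
      have := congrFun hc j
      rw [Pi.add_apply, unitVec_same, unitVec_ne (Ne.symm hij), zero_add] at this
      exact one_ne_zero this
    have h23 : unitVec i + unitVec j ≠ unitVec j := by
      intro hc
      have := congrFun hc i
      rw [Pi.add_apply, unitVec_same, unitVec_ne hij, add_zero] at this
      exact one_ne_zero this
    have hcard : ({0, unitVec i, unitVec j, unitVec i + unitVec j} :
        Set (Fin n → ZMod 2)).ncard = 4 := by
      rw [Set.ncard_insert_of_notMem (by simp [h1.symm, h2.symm, h3.symm]),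
        Set.ncard_insert_of_notMem (by simp [h12, h13.symm]),
        Set.ncard_insert_of_notMem (by simp [h23.symm]), Set.ncard_singleton]
    exact (Set.eq_of_subset_of_ncard_le hsub (by rw [h, hcard])).symm
  · left
    push_neg at hcase
    have key : ∀ x ∈ tsBall d 0 r, x ≠ 0 → ∃ i, x = unitVec i := by
      intro x hx hx0
      obtain ⟨i, hi⟩ := Function.ne_iff.1 hx0
      simp only [Pi.zero_apply] at hi
      refine ⟨i, funext fun l => ?_⟩
      by_cases hl : l = i
      · subst hl; rw [unitVec_same]; exact zmod2_ne_zero hi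
      · rw [unitVec_ne hl]
        by_contra hxl
        exact hi (hcase x hx l i hl hxl)
    have hfin : (tsBall d 0 r).Finite := Set.toFinite _
    have h3 : (tsBall d 0 r \ {0}).ncard = 3 := by
      rw [Set.ncard_diff_singleton_of_mem h0, h]
    obtain ⟨a, b, c, hab, hac, hbc, hS⟩ := Set.ncard_eq_three.1 h3
    have ha : a ∈ tsBall d 0 r ∧ a ≠ 0 := by
      have : a ∈ tsBall d 0 r \ {0} := by rw [hS]; simp
      exact ⟨this.1, this.2⟩
    have hb : b ∈ tsBall d 0 r ∧ b ≠ 0 := by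
      have : b ∈ tsBall d 0 r \ {0} := by rw [hS]; simp
      exact ⟨this.1, this.2⟩
    have hc : c ∈ tsBall d 0 r ∧ c ≠ 0 := by
      have : c ∈ tsBall d 0 r \ {0} := by rw [hS]; simp
      exact ⟨this.1, this.2⟩
    obtain ⟨i, rfl⟩ := key a ha.1 ha.2
    obtain ⟨j, rfl⟩ := key b hb.1 hb.2
    obtain ⟨k, rfl⟩ := key c hc.1 hc.2
    refine ⟨i, j, k, fun e => hab (e ▸ rfl), fun e => hac (e ▸ rfl),
      fun e => hbc (e ▸ rfl), ?_⟩
    have e1 : insert (0 : Fin n → ZMod 2) (tsBall d 0 r \ {0}) = tsBall d 0 r := by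
      rw [Set.insert_diff_singleton, Set.insert_eq_self.2 h0]
    rw [← e1, hS]
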